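/- arXiv:1910.09276 — 4 statements merged into one kernel-verified Lean document; each statement's English description precedes it below -/
import Mathlib

section
/- With ψ, ψ*, Φ, and the Fenchel coupling F as defined, for all p ∈ X and y, y' ∈ ℝ^D: F(p, y') ≤ F(p, y) + ⟨y' - y, Φ(y) - p⟩ + (1/(2K))‖y' - y‖²_*, where ‖·‖_* is the dual norm. -/
open scoped InnerProductSpace

/-- Second Fenchel coupling inequality:
`F(p,y') ≤ F(p,y) + ⟪y' - y, Φ(y) - p⟫ + (1/(2K))‖y' - y‖²_*`. -/
theorem fenchel_coupling_upper_bound {D : ℕ}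
    (X : Set (EuclideanSpace ℝ (Fin D)))
    (hXne : X.Nonempty) (hXc : IsCompact X) (hXconv : Convex ℝ X)
    (N : EuclideanSpace ℝ (Fin D) → ℝ)
    (hN_add : ∀ x y, N (x + y) ≤ N x + N y)
    (hN_smul : ∀ (a : ℝ) x, N (a • x) = |a| * N x)
    (hN_pos : ∀ x, x ≠ 0 → 0 < N x)
    -- the dual norm of N
    (Nd : EuclideanSpace ℝ (Fin D) → ℝ)
    (hNd : ∀ z, Nd z = sSup ((fun x => ⟪z, x⟫_ℝ) '' {x | N x ≤ 1}))
    (K : ℝ) (hK : 0 < K)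
    (ψ : EuclideanSpace ℝ (Fin D) → ℝ) (hψcont : ContinuousOn ψ X)
    (hψsc : ∀ x ∈ X, ∀ y ∈ X, ∀ l ∈ Set.Icc (0:ℝ) 1,
      ψ (l • x + (1 - l) • y) ≤ l * ψ x + (1 - l) * ψ y - K / 2 * l * (1 - l) * (N (x - y))^2)
    (Φ : EuclideanSpace ℝ (Fin D) → EuclideanSpace ℝ (Fin D))
    (hΦ : ∀ y, Φ y ∈ X ∧ ∀ x ∈ X, ⟪y, x⟫_ℝ - ψ x ≤ ⟪y, Φ y⟫_ℝ - ψ (Φ y))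
    (ψs : EuclideanSpace ℝ (Fin D) → ℝ)
    (hψs : ∀ y, ψs y = ⟪y, Φ y⟫_ℝ - ψ (Φ y))
    -- the Fenchel coupling
    (F : EuclideanSpace ℝ (Fin D) → EuclideanSpace ℝ (Fin D) → ℝ)
    (hF : ∀ p y, F p y = ψ p + ψs y - ⟪p, y⟫_ℝ) :
    ∀ p ∈ X, ∀ y y',
      F p y' ≤ F p y + ⟪y' - y, Φ y - p⟫_ℝ + 1 / (2 * K) * (Nd (y' - y))^2 := by
  classical
  -- Basic facts about N
  have hN0 : N 0 = 0 := by simpa using hN_smul 0 0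
  have hN_neg : ∀ x, N (-x) = N x := by
    intro x
    have := hN_smul (-1) x
    simpa using this
  have hN_nonneg : ∀ x, 0 ≤ N x := by
    intro x
    have h1 : N (x + (-x)) ≤ N x + N (-x) := hN_add x (-x)
    rw [add_neg_cancel, hN0, hN_neg] at h1
    linarith
  -- N is Lipschitz w.r.t. the Euclidean norm
  have hN_sum : ∀ (s : Finset (Fin D)) (f : Fin D → EuclideanSpace ℝ (Fin D)),
      N (∑ i ∈ s, f i) ≤ ∑ i ∈ s, N (f i) := by
    intro s f
    induction s using Finset.induction with
    | empty => simp [hN0]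
    | @insert a s ha ih =>
        rw [Finset.sum_insert ha, Finset.sum_insert ha]
        calc N (f a + ∑ i ∈ s, f i) ≤ N (f a) + N (∑ i ∈ s, f i) := hN_add _ _
          _ ≤ N (f a) + ∑ i ∈ s, N (f i) := by linarith
  obtain ⟨C, hC0, hC⟩ : ∃ C, 0 ≤ C ∧ ∀ v, N v ≤ C * ‖v‖ := by
    refine ⟨∑ i, N (EuclideanSpace.single i (1:ℝ)), Finset.sum_nonneg fun i _ => hN_nonneg _, ?_⟩
    intro v
    have hdecomp : ∑ i, v i • EuclideanSpace.single i (1:ℝ) = v := by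
      ext j
      rw [WithLp.ofLp_sum, Finset.sum_apply]
      simp [EuclideanSpace.single_apply, PiLp.smul_apply]
    calc N v = N (∑ i, v i • EuclideanSpace.single i (1:ℝ)) := by rw [hdecomp]
      _ ≤ ∑ i, N (v i • EuclideanSpace.single i (1:ℝ)) := hN_sum _ _
      _ = ∑ i, |v i| * N (EuclideanSpace.single i (1:ℝ)) := by
          simp only [hN_smul]
      _ ≤ ∑ i, ‖v‖ * N (EuclideanSpace.single i (1:ℝ)) := by
          refine Finset.sum_le_sum fun i _ => ?_
          have habs : |v i| ≤ ‖v‖ := by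
            have h := abs_real_inner_le_norm (EuclideanSpace.single i (1:ℝ)) v
            simpa [EuclideanSpace.inner_single_left] using h
          exact mul_le_mul_of_nonneg_right habs (hN_nonneg _)
      _ = (∑ i, N (EuclideanSpace.single i (1:ℝ))) * ‖v‖ := by
          rw [← Finset.mul_sum]
          ring
  have hNcont : Continuous N := by
    have hlip : ∀ a b, |N a - N b| ≤ C * ‖a - b‖ := by
      intro a b
      rw [abs_sub_le_iff]
      constructor
      · have h1 : N a ≤ N (a - b) + N b := by
          have := hN_add (a - b) b
          simpa using this
        have h2 := hC (a - b)
        linarith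
      · have h1 : N b ≤ N (b - a) + N a := by
          have := hN_add (b - a) a
          simpa using this
        have h2 := hC (b - a)
        have h3 : ‖b - a‖ = ‖a - b‖ := norm_sub_rev b a
        rw [h3] at h2
        linarith
    rw [Metric.continuous_iff]
    intro b ε hε
    rcases eq_or_lt_of_le hC0 with hC0' | hC0'
    · refine ⟨1, one_pos, fun a _ => ?_⟩
      have := hlip a b
      rw [← hC0'] at this
      simp only [zero_mul] at this
      rw [Real.dist_eq]
      linarith [abs_nonneg (N a - N b), hε]
    · refine ⟨ε / C, div_pos hε hC0', fun a ha => ?_⟩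
      rw [Real.dist_eq]
      have h1 := hlip a b
      have h2 : ‖a - b‖ < ε / C := by rwa [dist_eq_norm] at ha
      calc |N a - N b| ≤ C * ‖a - b‖ := h1
        _ < C * (ε / C) := by exact mul_lt_mul_of_pos_left h2 hC0'
        _ = ε := by field_simp
  -- The pairing inequality: ⟪z, v⟫ ≤ Nd z * N v
  have pairing : ∀ z v, ⟪z, v⟫_ℝ ≤ Nd z * N v := by
    intro z v
    rcases eq_or_ne v 0 with rfl | hv
    · simp [hN0]
    · -- the space is nontrivial; find the min of N on the unit sphere
      have hvnorm : (0:ℝ) < ‖v‖ := norm_pos_iff.mpr hv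
      have hsph : (Metric.sphere (0:EuclideanSpace ℝ (Fin D)) 1).Nonempty := by
        refine ⟨‖v‖⁻¹ • v, ?_⟩
        rw [mem_sphere_zero_iff_norm]
        exact norm_smul_inv_norm (𝕜 := ℝ) hv
      obtain ⟨x₀, hx₀mem, hx₀min⟩ :=
        (isCompact_sphere (0:EuclideanSpace ℝ (Fin D)) 1).exists_isMinOn hsph hNcont.continuousOn
      have hx₀norm : ‖x₀‖ = 1 := mem_sphere_zero_iff_norm.mp hx₀mem
      have hx₀ne : x₀ ≠ 0 := by
        intro h; rw [h, norm_zero] at hx₀norm; exact one_ne_zero hx₀norm.symm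
      set c := N x₀ with hc
      have hcpos : 0 < c := hN_pos _ hx₀ne
      have hlow : ∀ w, c * ‖w‖ ≤ N w := by
        intro w
        rcases eq_or_ne w 0 with rfl | hw
        · simp [hN0]
        · have hwn : (0:ℝ) < ‖w‖ := norm_pos_iff.mpr hw
          have hmem : (‖w‖⁻¹ • w) ∈ Metric.sphere (0:EuclideanSpace ℝ (Fin D)) 1 := by
            rw [mem_sphere_zero_iff_norm]
            exact norm_smul_inv_norm (𝕜 := ℝ) hw
          have h1 : c ≤ N (‖w‖⁻¹ • w) := hx₀min hmem
          rw [hN_smul, abs_inv, abs_of_pos hwn] at h1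
          rw [mul_comm]
          calc ‖w‖ * c ≤ ‖w‖ * (‖w‖⁻¹ * N w) := by
                exact mul_le_mul_of_nonneg_left h1 hwn.le
            _ = N w := by field_simp
      have hbdd : BddAbove ((fun x => ⟪z, x⟫_ℝ) '' {x | N x ≤ 1}) := by
        refine ⟨‖z‖ * c⁻¹, ?_⟩
        rintro r ⟨x, hx, rfl⟩
        have h1 : c * ‖x‖ ≤ 1 := le_trans (hlow x) hx
        have h2 : ⟪z, x⟫_ℝ ≤ ‖z‖ * ‖x‖ := real_inner_le_norm z x
        have h3 : ‖x‖ ≤ c⁻¹ := by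
          rw [inv_eq_one_div, le_div_iff₀ hcpos]
          linarith
        calc ⟪z, x⟫_ℝ ≤ ‖z‖ * ‖x‖ := h2
          _ ≤ ‖z‖ * c⁻¹ := mul_le_mul_of_nonneg_left h3 (norm_nonneg z)
      have hNv : 0 < N v := hN_pos v hv
      have hmem : ((N v)⁻¹ • v) ∈ {x | N x ≤ 1} := by
        simp only [Set.mem_setOf_eq, hN_smul, abs_inv, abs_of_pos hNv]
        rw [inv_mul_cancel₀ hNv.ne']
      have hle : ⟪z, (N v)⁻¹ • v⟫_ℝ ≤ Nd z := by
        rw [hNd]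
        exact le_csSup hbdd ⟨_, hmem, rfl⟩
      rw [real_inner_smul_right] at hle
      calc ⟪z, v⟫_ℝ = N v * ((N v)⁻¹ * ⟪z, v⟫_ℝ) := by field_simp
        _ ≤ N v * Nd z := mul_le_mul_of_nonneg_left hle hNv.le
        _ = Nd z * N v := mul_comm _ _
  -- The key strong-convexity/optimality inequality
  have keyA : ∀ y, ∀ x' ∈ X,
      ⟪y, x' - Φ y⟫_ℝ ≤ ψ x' - ψ (Φ y) - K / 2 * (N (x' - Φ y))^2 := by
    intro y x' hx'
    obtain ⟨hxX, hxmax⟩ := hΦ y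
    set x := Φ y with hxdef
    set A : ℝ := ⟪y, x' - x⟫_ℝ - (ψ x' - ψ x) with hA
    set B : ℝ := K / 2 * (N (x' - x))^2 with hB
    have hBnn : 0 ≤ B := by
      have := sq_nonneg (N (x' - x))
      have : 0 ≤ (N (x' - x))^2 := this
      positivity
    have hstep : ∀ l : ℝ, 0 < l → l ≤ 1 → A + B ≤ l * B := by
      intro l hl0 hl1
      have hz : l • x' + (1 - l) • x ∈ X :=
        hXconv hx' hxX hl0.le (by linarith) (by ring)
      have h1 := hxmax _ hz
      have h2 := hψsc x' hx' x hxX l ⟨hl0.le, hl1⟩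
      have h3 : ⟪y, l • x' + (1 - l) • x⟫_ℝ = l * ⟪y, x'⟫_ℝ + (1 - l) * ⟪y, x⟫_ℝ := by
        rw [inner_add_right, real_inner_smul_right, real_inner_smul_right]
      have h4 : ⟪y, x' - x⟫_ℝ = ⟪y, x'⟫_ℝ - ⟪y, x⟫_ℝ := inner_sub_right y x' x
      -- combine: l * (A + (1-l) * B') ≤ 0 where B' = K/2 * N²
      have hcomb : l * (A + B - l * B) ≤ 0 := by
        rw [hA, hB]
        have := h1
        rw [h3] at this
        nlinarith [h2, this, h4]
      nlinarith [hcomb, hl0]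
    have : A + B ≤ 0 := by
      refine le_of_forall_pos_le_add ?_
      intro ε hε
      rcases le_or_gt B 0 with hB0 | hB0
      · have := hstep 1 one_pos le_rfl
        linarith
      · set l := min 1 (ε / B) with hl
        have hl0 : 0 < l := lt_min one_pos (div_pos hε hB0)
        have hl1 : l ≤ 1 := min_le_left _ _
        have h := hstep l hl0 hl1
        have : l * B ≤ ε := by
          have h2 : l ≤ ε / B := min_le_right _ _
          calc l * B ≤ (ε / B) * B := mul_le_mul_of_nonneg_right h2 hB0.le
            _ = ε := by field_simp
        linarith
    rw [hA, hB] at this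
    linarith
  -- Main combination
  intro p hp y y'
  have hx'X := (hΦ y').1
  have hA := keyA y (Φ y') hx'X
  have hP := pairing (y' - y) (Φ y' - Φ y)
  have hg : ⟪y' - y, Φ y' - Φ y⟫_ℝ
      = ⟪y', Φ y'⟫_ℝ - ⟪y, Φ y'⟫_ℝ - ⟪y', Φ y⟫_ℝ + ⟪y, Φ y⟫_ℝ := by
    rw [inner_sub_left, inner_sub_right, inner_sub_right]; ring
  have hA' : ⟪y, Φ y' - Φ y⟫_ℝ = ⟪y, Φ y'⟫_ℝ - ⟪y, Φ y⟫_ℝ := inner_sub_right y _ _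
  have hgoal1 : ⟪y' - y, Φ y - p⟫_ℝ
      = ⟪y', Φ y⟫_ℝ - ⟪y, Φ y⟫_ℝ - ⟪y', p⟫_ℝ + ⟪y, p⟫_ℝ := by
    rw [inner_sub_left, inner_sub_right, inner_sub_right]; ring
  have hc1 : ⟪p, y'⟫_ℝ = ⟪y', p⟫_ℝ := real_inner_comm _ _
  have hc2 : ⟪p, y⟫_ℝ = ⟪y, p⟫_ℝ := real_inner_comm _ _
  have key2 : Nd (y' - y) * N (Φ y' - Φ y) - K / 2 * (N (Φ y' - Φ y))^2
      ≤ 1 / (2 * K) * (Nd (y' - y))^2 := by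
    set a := Nd (y' - y)
    set b := N (Φ y' - Φ y)
    have hq : 0 ≤ (a - K * b)^2 := sq_nonneg _
    have h2K : (0:ℝ) < 2 * K := by linarith
    have heq : 1 / (2 * K) * a^2 - (a * b - K / 2 * b^2) = (a - K * b)^2 / (2 * K) := by
      field_simp; ring
    have hpos : 0 ≤ (a - K * b)^2 / (2 * K) := div_nonneg hq h2K.le
    linarith
  rw [hF, hF, hψs, hψs, hgoal1, hc1, hc2]
  rw [hA'] at hA
  rw [hg] at hP
  linarith
end

section
/- Let X = Π_{i=1}^N X_i be a product of nonempty compact convex sets, Q = X ∩ {x : Ax ≤ b} nonempty, and suppose each u_i(·, x^{(-i)}) is concave with v(x) = (∇_{x^{(i)}} u_i(x))_i continuous. If x̄ ∈ Q satisfies ⟨x - x̄, v(x̄)⟩ ≤ 0 for all x ∈ Q, then x̄ is a generalized Nash equilibrium: for every player i, u_i(x̄) ≥ u_i(x^{(i)}, x̄^{(-i)}) for all x^{(i)} ∈ X_i with A(x^{(i)}, x̄^{(-i)}) ≤ b. -/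
open scoped InnerProductSpace

/-- In a concave game with coupled affine constraints, a solution of the
variational inequality `VI(Q, v)` is a generalized Nash equilibrium. -/
theorem sol_vi_is_generalized_nash {n : ℕ} {Dim : Fin n → ℕ} {M : ℕ}
    -- strategy sets
    (X : ∀ i, Set (EuclideanSpace ℝ (Fin (Dim i))))
    (hXne : ∀ i, (X i).Nonempty) (hXc : ∀ i, IsCompact (X i))
    (hXconv : ∀ i, Convex ℝ (X i))
    -- payoffs and partial gradients
    (u : Fin n → (∀ i, EuclideanSpace ℝ (Fin (Dim i))) → ℝ)
    (v : ∀ i, (∀ j, EuclideanSpace ℝ (Fin (Dim j))) → EuclideanSpace ℝ (Fin (Dim i)))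
    (hconc : ∀ i, ∀ x, ConcaveOn ℝ (X i) (fun xi => u i (Function.update x i xi)))
    (hgrad : ∀ i, ∀ x : ∀ j, EuclideanSpace ℝ (Fin (Dim j)),
      HasGradientAt (fun xi => u i (Function.update x i xi)) (v i x) (x i))
    (hvcont : ∀ i, Continuous (v i))
    -- affine coupling constraint A x ≤ b (block form)
    (A : ∀ i, Fin M → EuclideanSpace ℝ (Fin (Dim i)) →ₗ[ℝ] ℝ) (b : Fin M → ℝ)
    -- Q nonempty
    (hQne : ∃ x : ∀ j, EuclideanSpace ℝ (Fin (Dim j)),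
      (∀ i, x i ∈ X i) ∧ ∀ m, (∑ i, A i m (x i)) ≤ b m)
    -- a solution of VI(Q, v)
    (xb : ∀ j, EuclideanSpace ℝ (Fin (Dim j)))
    (hxbX : ∀ i, xb i ∈ X i) (hxbC : ∀ m, (∑ i, A i m (xb i)) ≤ b m)
    (hvi : ∀ x : ∀ j, EuclideanSpace ℝ (Fin (Dim j)),
      (∀ i, x i ∈ X i) → (∀ m, (∑ i, A i m (x i)) ≤ b m) →
      (∑ i, ⟪x i - xb i, v i xb⟫_ℝ) ≤ 0) :
    -- generalized Nash equilibrium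
    ∀ i, ∀ xi ∈ X i, (∀ m, (∑ j, A j m (Function.update xb i xi j)) ≤ b m) →
      u i (Function.update xb i xi) ≤ u i xb := by
  intro i xi hxi hfeas
  set f : EuclideanSpace ℝ (Fin (Dim i)) → ℝ := fun y => u i (Function.update xb i y) with hfdef
  -- Step 1: the VI at the single deviation gives the inner-product inequality
  have hvle : ⟪xi - xb i, v i xb⟫_ℝ ≤ 0 := by
    have h := hvi (Function.update xb i xi)
      (fun j => by
        rcases eq_or_ne j i with rfl | hj
        · simpa using hxi
        · simpa [Function.update_of_ne hj] using hxbX j) hfeas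
    rwa [Finset.sum_eq_single i
      (fun j _ hj => by simp [Function.update_of_ne hj])
      (by simp), Function.update_self] at h
  -- Step 2: the directional derivative along xi - xb i
  have hf : HasGradientAt f (v i xb) (xb i) := hgrad i xb
  have h1 : HasDerivAt (fun t : ℝ => xb i + t • (xi - xb i)) (xi - xb i) 0 := by
    simpa using ((hasDerivAt_id (0 : ℝ)).smul_const (xi - xb i)).const_add (xb i)
  have hφ : HasDerivAt (fun t : ℝ => f (xb i + t • (xi - xb i)))
      ⟪v i xb, xi - xb i⟫_ℝ 0 := by
    have h2' : HasFDerivAt f (InnerProductSpace.toDual ℝ _ (v i xb))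
        ((fun t : ℝ => xb i + t • (xi - xb i)) 0) := by simpa using hf.hasFDerivAt
    have h2 := h2'.comp_hasDerivAt 0 h1
    exact h2
  rw [hasDerivAt_iff_tendsto_slope] at hφ
  have hφ' : Filter.Tendsto (slope (fun t : ℝ => f (xb i + t • (xi - xb i))) 0)
      (nhdsWithin 0 (Set.Ioi 0)) (nhds ⟪v i xb, xi - xb i⟫_ℝ) :=
    hφ.mono_left (nhdsWithin_mono 0 (fun t ht => ht.ne'))
  -- Step 3: concavity gives the slope bound
  have key : f xi - f (xb i) ≤ ⟪v i xb, xi - xb i⟫_ℝ := by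
    refine ge_of_tendsto hφ' ?_
    filter_upwards [Ioc_mem_nhdsGT_of_mem (Set.left_mem_Ico.2 one_pos)] with t ht
    have hcc := (hconc i xb).2 hxi (hxbX i) ht.1.le (sub_nonneg.2 ht.2) (by ring)
    have hpt : t • xi + (1 - t) • xb i = xb i + t • (xi - xb i) := by module
    rw [hpt] at hcc
    rw [slope_def_field, sub_zero, div_eq_inv_mul, le_inv_mul_iff₀ ht.1, mul_comm]
    have h0 : f (xb i + (0:ℝ) • (xi - xb i)) = f (xb i) := by simp
    rw [h0]
    calc (f xi - f (xb i)) * t = t • f xi + (1 - t) • f (xb i) - f (xb i) := by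
          simp [smul_eq_mul]; ring
      _ ≤ f (xb i + t • (xi - xb i)) - f (xb i) := sub_le_sub_right hcc _
  have hfa : f (xb i) = u i xb := by simp [hfdef]
  have : ⟪v i xb, xi - xb i⟫_ℝ = ⟪xi - xb i, v i xb⟫_ℝ := real_inner_comm _ _
  show f xi ≤ u i xb
  linarith [key, hvle, hfa]
end

section
/- Let X ⊆ ℝ^D be nonempty compact convex, v : X → ℝ^D continuous, A ∈ ℝ^{M×D}, b ∈ ℝ^M, Q = {x ∈ X : Ax ≤ b}, and suppose Slater's condition holds: there exists x* in the relative interior of X with Ax* < b componentwise. Define ṽ(x,λ) = (v(x) - Aᵀλ, Ax - b) on X × ℝ^M_{≥0}. Then x̄ ∈ Q solves VI(Q, v) if and only if there exists λ̄ ∈ ℝ^M_{≥0} such that (x̄, λ̄) solves VI(X × ℝ^M_{≥0}, ṽ). -/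
private lemma combo_lt {a1 b1 a2 b2 t s : ℝ} (ht : 0 ≤ t) (hs : 0 ≤ s) (hts : t + s = 1)
    (h1 : a1 < b1) (h2 : a2 < b2) : t * a1 + s * a2 < t * b1 + s * b2 := by
  rcases eq_or_lt_of_le ht with h | h
  · have hs1 : s = 1 := by linarith
    simp [← h, hs1, h2]
  · have := mul_lt_mul_of_pos_left h1 h
    have := mul_le_mul_of_nonneg_left h2.le hs
    linarith

private lemma sum_lin {D : ℕ} (c x1 x2 : Fin D → ℝ) (t s : ℝ) :
    ∑ j, c j * (t • x1 + s • x2) j = t * (∑ j, c j * x1 j) + s * (∑ j, c j * x2 j) := by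
  simp only [Pi.add_apply, Pi.smul_apply, smul_eq_mul, mul_add, Finset.sum_add_distrib,
    Finset.mul_sum]
  congr 1 <;> exact Finset.sum_congr rfl fun j _ => by ring

/-- Existence of a Lagrange multiplier for a linear program over a convex set
with affine inequality constraints, under Slater's condition. -/
private lemma lagrange_mult {D M : ℕ} (X : Set (Fin D → ℝ)) (hXconv : Convex ℝ X)
    (c : Fin D → ℝ) (A : Matrix (Fin M) (Fin D) ℝ) (b : Fin M → ℝ)
    (xb : Fin D → ℝ)
    (xs : Fin D → ℝ) (hxsX : xs ∈ X) (hxs : ∀ m, (∑ j, A m j * xs j) < b m)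
    (hopt : ∀ x ∈ X, (∀ m, (∑ j, A m j * x j) ≤ b m) →
      (∑ j, c j * xb j) ≤ ∑ j, c j * x j) :
    ∃ lam : Fin M → ℝ, (∀ m, 0 ≤ lam m) ∧
      ∀ x ∈ X, (∑ j, c j * xb j) ≤ (∑ j, c j * x j) +
        ∑ m, lam m * ((∑ j, A m j * x j) - b m) := by
  classical
  set p := ∑ j, c j * xb j with hp
  set S : Set (ℝ × (Fin M → ℝ)) :=
    {y | ∃ x ∈ X, ((∑ j, c j * x j) - p < y.1 ∧ ∀ m, (∑ j, A m j * x j) - b m < y.2 m)} with hS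
  -- S is convex
  have hSconv : Convex ℝ S := by
    rintro y1 ⟨x1, hx1, hy1a, hy1b⟩ y2 ⟨x2, hx2, hy2a, hy2b⟩ t s ht hs hts
    refine ⟨t • x1 + s • x2, hXconv hx1 hx2 ht hs hts, ?_, fun m => ?_⟩
    · rw [sum_lin]
      have h1 := combo_lt ht hs hts hy1a hy2a
      have h2 : t * p + s * p = p := by linear_combination p * hts
      simp only [Prod.fst_add, Prod.smul_fst, smul_eq_mul]
      linarith
    · rw [sum_lin]
      have h1 := combo_lt ht hs hts (hy1b m) (hy2b m)
      have h2 : t * b m + s * b m = b m := by linear_combination (b m) * hts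
      simp only [Prod.snd_add, Prod.smul_snd, Pi.add_apply, Pi.smul_apply, smul_eq_mul]
      linarith
  -- S is open
  have hSopen : IsOpen S := by
    have : S = ⋃ x ∈ X, ({y : ℝ × (Fin M → ℝ) | (∑ j, c j * x j) - p < y.1} ∩
        ⋂ m, {y : ℝ × (Fin M → ℝ) | (∑ j, A m j * x j) - b m < y.2 m}) := by
      ext y
      simp only [hS, Set.mem_setOf_eq, Set.mem_iUnion, Set.mem_inter_iff, Set.mem_iInter,
        exists_prop]
    rw [this]
    refine isOpen_biUnion fun x _ => IsOpen.inter ?_ (isOpen_iInter_of_finite fun m => ?_)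
    · exact isOpen_lt continuous_const continuous_fst
    · exact isOpen_lt continuous_const ((continuous_apply m).comp continuous_snd)
  -- 0 ∉ S
  have h0 : (0 : ℝ × (Fin M → ℝ)) ∉ S := by
    rintro ⟨x, hx, hxa, hxb'⟩
    have hfeas : ∀ m, (∑ j, A m j * x j) ≤ b m := fun m => by
      have := hxb' m; simp at this; linarith
    have := hopt x hx hfeas
    simp at hxa
    linarith
  obtain ⟨f, hf⟩ := geometric_hahn_banach_open_point hSconv hSopen h0
  have hf0 : f 0 = 0 := map_zero f
  rw [hf0] at hf
  -- decompose f
  set α := f ((1:ℝ), (0 : Fin M → ℝ)) with hα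
  set μ : Fin M → ℝ := fun m => f ((0:ℝ), (Pi.single m 1 : Fin M → ℝ)) with hμ
  have hrepr : ∀ (r : ℝ) (u : Fin M → ℝ),
      f (r, u) = α * r + ∑ m, μ m * u m := by
    intro r u
    have : ((r, u) : ℝ × (Fin M → ℝ)) =
        r • ((1:ℝ), (0 : Fin M → ℝ)) + ∑ m, u m • ((0:ℝ), (Pi.single m 1 : Fin M → ℝ)) := by
      apply Prod.ext
      · simp [Prod.fst_sum]
      · simp only [Prod.snd_add, Prod.smul_snd, Prod.snd_sum, smul_zero, zero_add]
        funext j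
        simp [Finset.sum_apply, Pi.single_apply, mul_ite, Finset.sum_ite_eq']
    rw [this, map_add, map_smul, map_sum]
    simp only [smul_eq_mul]
    rw [mul_comm]
    congr 1
    exact Finset.sum_congr rfl fun m _ => by rw [map_smul]; simp [mul_comm, hμ]
  -- S is upward closed
  have hSup : ∀ y ∈ S, ∀ z : ℝ × (Fin M → ℝ), y.1 ≤ z.1 → (∀ m, y.2 m ≤ z.2 m) → z ∈ S := by
    rintro y ⟨x, hx, ha, hb'⟩ z h1 h2
    exact ⟨x, hx, lt_of_lt_of_le ha h1, fun m => lt_of_lt_of_le (hb' m) (h2 m)⟩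
  -- a point of S
  set y0 : ℝ × (Fin M → ℝ) :=
    ((∑ j, c j * xs j) - p + 1, fun m => (∑ j, A m j * xs j) - b m + 1) with hy0
  have hy0S : y0 ∈ S := ⟨xs, hxsX, by simp [hy0], fun m => by simp [hy0]⟩
  have hy0lt : f y0 < 0 := hf y0 hy0S
  -- nonpositivity of f in nonnegative directions
  have key : ∀ w : ℝ × (Fin M → ℝ), 0 ≤ w.1 → (∀ m, 0 ≤ w.2 m) → f w ≤ 0 := by
    intro w hw1 hw2
    by_contra h; push_neg at h
    set t := (1 - f y0) / f w with ht
    have htpos : 0 < t := div_pos (by linarith) h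
    have hz : y0 + t • w ∈ S := by
      refine hSup y0 hy0S _ ?_ (fun m => ?_)
      · simp only [Prod.fst_add, Prod.smul_fst, smul_eq_mul]
        nlinarith
      · simp only [Prod.snd_add, Prod.smul_snd, Pi.add_apply, Pi.smul_apply, smul_eq_mul]
        nlinarith [hw2 m]
    have h1 := hf _ hz
    rw [map_add, map_smul, smul_eq_mul, ht, div_mul_cancel₀ _ (ne_of_gt h)] at h1
    linarith
  have hαle : α ≤ 0 := key ((1:ℝ), (0 : Fin M → ℝ)) (by norm_num) (fun m => by simp)
  have hμle : ∀ m, μ m ≤ 0 := by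
    intro m
    refine key ((0:ℝ), (Pi.single m 1 : Fin M → ℝ)) (by norm_num) (fun k => ?_)
    by_cases hk : k = m <;> simp [Pi.single_apply, hk]
  -- the limiting inequality
  have hbase : ∀ x ∈ X,
      α * ((∑ j, c j * x j) - p) + ∑ m, μ m * ((∑ j, A m j * x j) - b m) ≤ 0 := by
    intro x hx
    set base := α * ((∑ j, c j * x j) - p) + ∑ m, μ m * ((∑ j, A m j * x j) - b m)
      with hbasedef
    set K := α + ∑ m, μ m with hKdef
    have hstep : ∀ ε : ℝ, 0 < ε → base + ε * K < 0 := by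
      intro ε hε
      have hmem : (((∑ j, c j * x j) - p + ε,
          fun m => (∑ j, A m j * x j) - b m + ε) : ℝ × (Fin M → ℝ)) ∈ S :=
        ⟨x, hx, by simp [hε], fun m => by simp [hε]⟩
      have h1 := hf _ hmem
      rw [hrepr] at h1
      have he : ∑ m, μ m * ((∑ j, A m j * x j) - b m + ε)
          = (∑ m, μ m * ((∑ j, A m j * x j) - b m)) + ε * ∑ m, μ m := by
        rw [Finset.mul_sum, ← Finset.sum_add_distrib]
        exact Finset.sum_congr rfl fun m _ => by ring
      rw [he] at h1
      have h2 : α * ((∑ j, c j * x j) - p + ε) = α * ((∑ j, c j * x j) - p) + ε * α := by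
        ring
      rw [hbasedef, hKdef]
      rw [h2] at h1
      have h3 : ε * (α + ∑ m, μ m) = ε * α + ε * ∑ m, μ m := by ring
      linarith [h3]
    by_contra hb; push_neg at hb
    rcases le_or_gt 0 K with hK0 | hK0
    · have := hstep 1 one_pos; nlinarith
    · have hKne : K ≠ 0 := ne_of_lt hK0
      have hε : 0 < base / (-K) := div_pos hb (by linarith)
      have h2 := hstep _ hε
      have h3 : base / (-K) * K = -base := by rw [div_neg, neg_mul, div_mul_cancel₀ _ hKne]
      linarith
  -- α is strictly negative
  have hαlt : α < 0 := by
    rcases lt_or_eq_of_le hαle with h | h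
    · exact h
    exfalso
    have hμ0 : ∀ m, μ m = 0 := by
      have h1 := hbase xs hxsX
      rw [h, zero_mul, zero_add] at h1
      have hnn : ∀ m ∈ Finset.univ,
          0 ≤ μ m * ((∑ j, A m j * xs j) - b m) := fun m _ =>
        by nlinarith [hμle m, hxs m]
      have hz : ∑ m, μ m * ((∑ j, A m j * xs j) - b m) = 0 :=
        le_antisymm h1 (Finset.sum_nonneg hnn)
      intro m
      have := (Finset.sum_eq_zero_iff_of_nonneg hnn).mp hz m (Finset.mem_univ m)
      rcases mul_eq_zero.mp this with h' | h'
      · exact h'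
      · exact absurd h' (by have := hxs m; intro hc; linarith)
    have hy0e := hrepr y0.1 y0.2
    rw [Prod.mk.eta] at hy0e
    rw [h] at hy0e
    simp [hμ0] at hy0e
    linarith
  -- conclusion
  refine ⟨fun m => μ m / α, fun m => ?_, fun x hx => ?_⟩
  · have := div_nonneg (neg_nonneg.mpr (hμle m)) (neg_nonneg.mpr hαlt.le)
    rwa [neg_div_neg_eq] at this
  · have h1 := hbase x hx
    set T := ((∑ j, c j * x j) - p) + ∑ m, μ m / α * ((∑ j, A m j * x j) - b m) with hT
    have hαT : α * T ≤ 0 := by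
      rw [hT, mul_add, Finset.mul_sum]
      have hcc : ∀ m ∈ Finset.univ,
          α * (μ m / α * ((∑ j, A m j * x j) - b m))
            = μ m * ((∑ j, A m j * x j) - b m) := fun m _ => by
        have hαne : α ≠ 0 := ne_of_lt hαlt
        field_simp
      rw [Finset.sum_congr rfl hcc]
      exact h1
    have hT0 : 0 ≤ T := by
      by_contra hT'; push_neg at hT'
      nlinarith [mul_pos_of_neg_of_neg hαlt hT']
    rw [hT] at hT0
    linarith

private lemma swap_sum {D M : ℕ} (A : Matrix (Fin M) (Fin D) ℝ)
    (lam : Fin M → ℝ) (x xb : Fin D → ℝ) :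
    ∑ j, (x j - xb j) * ∑ m, A m j * lam m
      = ∑ m, lam m * ((∑ j, A m j * x j) - (∑ j, A m j * xb j)) := by
  calc ∑ j, (x j - xb j) * ∑ m, A m j * lam m
      = ∑ j, ∑ m, (x j - xb j) * (A m j * lam m) := by
        exact Finset.sum_congr rfl fun j _ => Finset.mul_sum _ _ _
    _ = ∑ m, ∑ j, (x j - xb j) * (A m j * lam m) := Finset.sum_comm
    _ = ∑ m, lam m * ((∑ j, A m j * x j) - (∑ j, A m j * xb j)) := by
        refine Finset.sum_congr rfl fun m _ => ?_
        rw [mul_sub, Finset.mul_sum, Finset.mul_sum, ← Finset.sum_sub_distrib]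
        exact Finset.sum_congr rfl fun j _ => by ring



/-- Under Slater's condition, `xb ∈ Q` solves `VI(Q, v)` iff there is a
nonnegative multiplier `lam` such that `(xb, lam)` solves the extended variational
inequality `VI(X × ℝ^M_{≥0}, ṽ)` with `ṽ(x, λ) = (v(x) - Aᵀλ, Ax - b)`. -/
theorem vi_lagrangian_decoupling {D M : ℕ}
    (X : Set (Fin D → ℝ))
    (hXne : X.Nonempty) (hXc : IsCompact X) (hXconv : Convex ℝ X)
    (v : (Fin D → ℝ) → Fin D → ℝ) (hv : ContinuousOn v X)
    (A : Matrix (Fin M) (Fin D) ℝ) (b : Fin M → ℝ)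
    -- Slater's condition
    (hSlater : ∃ xs ∈ intrinsicInterior ℝ X, ∀ m, (∑ j, A m j * xs j) < b m)
    -- xb ∈ Q
    (xb : Fin D → ℝ) (hxbX : xb ∈ X) (hxbC : ∀ m, (∑ j, A m j * xb j) ≤ b m) :
    -- xb solves VI(Q, v) ...
    (∀ x ∈ X, (∀ m, (∑ j, A m j * x j) ≤ b m) →
        (∑ j, (x j - xb j) * v xb j) ≤ 0)
    ↔ -- ... iff (xb, lam) solves VI(X × ℝ^M_{≥0}, ṽ) for some lam ≥ 0
    (∃ lam : Fin M → ℝ, (∀ m, 0 ≤ lam m) ∧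
      ∀ x ∈ X, ∀ mu : Fin M → ℝ, (∀ m, 0 ≤ mu m) →
        (∑ j, (x j - xb j) * (v xb j - ∑ m, A m j * lam m)) +
          (∑ m, (mu m - lam m) * ((∑ j, A m j * xb j) - b m)) ≤ 0) := by
  classical
  constructor
  · -- forward
    intro hVI
    obtain ⟨xs, hxsI, hxs⟩ := hSlater
    have hxsX : xs ∈ X := intrinsicInterior_subset hxsI
    set c : Fin D → ℝ := fun j => -(v xb j) with hc
    have hopt : ∀ x ∈ X, (∀ m, (∑ j, A m j * x j) ≤ b m) →
        (∑ j, c j * xb j) ≤ ∑ j, c j * x j := by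
      intro x hx hfe
      have h := hVI x hx hfe
      have e1 : ∑ j, (x j - xb j) * v xb j
          = (∑ j, c j * xb j) - ∑ j, c j * x j := by
        rw [← Finset.sum_sub_distrib]
        exact Finset.sum_congr rfl fun j _ => by simp [hc]; ring
      rw [e1] at h
      linarith
    obtain ⟨lam, hlam, hlag⟩ := lagrange_mult X hXconv c A b xb xs hxsX hxs hopt
    set s := ∑ m, lam m * ((∑ j, A m j * xb j) - b m) with hsdef
    have hs_nonneg : 0 ≤ s := by
      have := hlag xb hxbX
      linarith
    have hs_nonpos : s ≤ 0 := Finset.sum_nonpos fun m _ =>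
      by nlinarith [hlam m, hxbC m]
    have hs0 : s = 0 := le_antisymm hs_nonpos hs_nonneg
    refine ⟨lam, hlam, fun x hx mu hmu => ?_⟩
    have e1 : ∑ j, (x j - xb j) * (v xb j - ∑ m, A m j * lam m)
        = (∑ j, (x j - xb j) * v xb j) - ∑ j, (x j - xb j) * ∑ m, A m j * lam m := by
      rw [← Finset.sum_sub_distrib]
      exact Finset.sum_congr rfl fun j _ => by ring
    have e2 : ∑ j, (x j - xb j) * v xb j
        = (∑ j, c j * xb j) - ∑ j, c j * x j := by
      rw [← Finset.sum_sub_distrib]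
      exact Finset.sum_congr rfl fun j _ => by simp [hc]; ring
    have e3 := swap_sum A lam x xb
    have e4 : ∑ m, lam m * ((∑ j, A m j * x j) - (∑ j, A m j * xb j))
        = (∑ m, lam m * ((∑ j, A m j * x j) - b m)) - s := by
      rw [hsdef, ← Finset.sum_sub_distrib]
      exact Finset.sum_congr rfl fun m _ => by ring
    have e5 : ∑ m, (mu m - lam m) * ((∑ j, A m j * xb j) - b m)
        = (∑ m, mu m * ((∑ j, A m j * xb j) - b m)) - s := by
      rw [hsdef, ← Finset.sum_sub_distrib]
      exact Finset.sum_congr rfl fun m _ => by ring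
    have h6 : ∑ m, mu m * ((∑ j, A m j * xb j) - b m) ≤ 0 :=
      Finset.sum_nonpos fun m _ =>
        by nlinarith [hmu m, hxbC m]
    have h7 := hlag x hx
    rw [e1, e2, e3, e4, e5]
    linarith
  · -- backward
    rintro ⟨lam, hlam, hVI⟩ x hx hfe
    have h1 := hVI xb hxbX 0 (fun m => le_rfl)
    simp only [sub_self, zero_mul, Finset.sum_const_zero, zero_add, zero_sub] at h1
    -- h1 : ∑ m, -lam m * (...) ≤ 0  (roughly)
    have hs_nonneg : 0 ≤ ∑ m, lam m * ((∑ j, A m j * xb j) - b m) := by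
      have e : ∑ m, ((0 : Fin M → ℝ) m - lam m) * ((∑ j, A m j * xb j) - b m)
          = -∑ m, lam m * ((∑ j, A m j * xb j) - b m) := by
        rw [← Finset.sum_neg_distrib]
        exact Finset.sum_congr rfl fun m _ => by rw [Pi.zero_apply]; ring
      rw [e] at h1
      linarith
    have h2 := hVI x hx lam hlam
    simp only [sub_self, zero_mul, Finset.sum_const_zero, add_zero] at h2
    have e1 : ∑ j, (x j - xb j) * (v xb j - ∑ m, A m j * lam m)
        = (∑ j, (x j - xb j) * v xb j) - ∑ j, (x j - xb j) * ∑ m, A m j * lam m := by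
      rw [← Finset.sum_sub_distrib]
      exact Finset.sum_congr rfl fun j _ => by ring
    have e3 := swap_sum A lam x xb
    have e4 : ∑ m, lam m * ((∑ j, A m j * x j) - (∑ j, A m j * xb j))
        = (∑ m, lam m * ((∑ j, A m j * x j) - b m))
          - ∑ m, lam m * ((∑ j, A m j * xb j) - b m) := by
      rw [← Finset.sum_sub_distrib]
      exact Finset.sum_congr rfl fun m _ => by ring
    have h5 : ∑ m, lam m * ((∑ j, A m j * x j) - b m) ≤ 0 :=
      Finset.sum_nonpos fun m _ =>
        by nlinarith [hlam m, hfe m]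
    rw [e1, e3, e4] at h2
    linarith
end

section
/- Let (x̄, λ̄) ∈ X × ℝ^M_{≥0} solve the extended variational inequality VI(X × ℝ^M_{≥0}, ṽ), where ṽ(x,λ) = (v(x) - Aᵀλ, Ax - b). Then x̄ ∈ Q = {x ∈ X : Ax ≤ b}, ⟨λ̄, Ax̄ - b⟩ = 0 (complementary slackness), and x̄ solves VI(Q, v). -/
/-- If `(xb, lam)` solves the extended variational inequality
`VI(X × ℝ^M_{≥0}, ṽ)` with `ṽ(x, λ) = (v(x) - Aᵀλ, Ax - b)`, then `xb` is feasible,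
complementary slackness holds, and `xb` solves `VI(Q, v)`. -/
theorem extended_vi_solution_properties {D M : ℕ}
    (X : Set (Fin D → ℝ))
    (hXne : X.Nonempty) (hXc : IsCompact X) (hXconv : Convex ℝ X)
    (v : (Fin D → ℝ) → Fin D → ℝ)
    (A : Matrix (Fin M) (Fin D) ℝ) (b : Fin M → ℝ)
    (xb : Fin D → ℝ) (lam : Fin M → ℝ)
    (hxbX : xb ∈ X) (hlam : ∀ m, 0 ≤ lam m)
    -- (xb, lam) solves the extended VI
    (hvi : ∀ x ∈ X, ∀ mu : Fin M → ℝ, (∀ m, 0 ≤ mu m) →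
      (∑ j, (x j - xb j) * (v xb j - ∑ m, A m j * lam m)) +
        (∑ m, (mu m - lam m) * ((∑ j, A m j * xb j) - b m)) ≤ 0) :
    -- feasibility
    (∀ m, (∑ j, A m j * xb j) ≤ b m) ∧
    -- complementary slackness
    (∑ m, lam m * ((∑ j, A m j * xb j) - b m)) = 0 ∧
    -- xb solves VI(Q, v)
    (∀ x ∈ X, (∀ m, (∑ j, A m j * x j) ≤ b m) →
      (∑ j, (x j - xb j) * v xb j) ≤ 0) := by
  -- feasibility
  have hfeas : ∀ m, (∑ j, A m j * xb j) ≤ b m := by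
    intro m0
    have h := hvi xb hxbX (fun m => lam m + if m = m0 then 1 else 0)
      (fun m => by have := hlam m; split <;> linarith)
    simp only [sub_self, zero_mul, Finset.sum_const_zero, zero_add,
      add_sub_cancel_left] at h
    have : (∑ m, (if m = m0 then (1:ℝ) else 0) * ((∑ j, A m j * xb j) - b m))
        = (∑ j, A m0 j * xb j) - b m0 := by
      rw [Finset.sum_eq_single m0]
      · simp
      · intro c _ hc; simp [hc]
      · simp
    rw [this] at h
    linarith
  have hcs : (∑ m, lam m * ((∑ j, A m j * xb j) - b m)) = 0 := by
    have h0 := hvi xb hxbX 0 (fun m => le_refl 0)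
    have h2 := hvi xb hxbX (fun m => lam m + lam m) (fun m => by have := hlam m; linarith)
    simp only [sub_self, zero_mul, Finset.sum_const_zero, zero_add, zero_sub, Pi.zero_apply, Pi.smul_apply, smul_eq_mul] at h0 h2
    have e0 : (∑ m, -lam m * ((∑ j, A m j * xb j) - b m))
        = -(∑ m, lam m * ((∑ j, A m j * xb j) - b m)) := by
      rw [← Finset.sum_neg_distrib]; congr 1; ext m; ring
    have e2 : (∑ m, (lam m + lam m - lam m) * ((∑ j, A m j * xb j) - b m))
        = (∑ m, lam m * ((∑ j, A m j * xb j) - b m)) := by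
      congr 1; ext m; ring
    rw [e0] at h0; rw [e2] at h2
    linarith
  refine ⟨hfeas, hcs, ?_⟩
  intro x hx hxQ
  have h := hvi x hx lam hlam
  simp only [sub_self, zero_mul, Finset.sum_const_zero, add_zero] at h
  have swap : (∑ j, (x j - xb j) * (∑ m, A m j * lam m))
      = ∑ m, lam m * ((∑ j, A m j * x j) - ∑ j, A m j * xb j) :=
    calc (∑ j, (x j - xb j) * (∑ m, A m j * lam m))
        = ∑ j, ∑ m, (x j - xb j) * (A m j * lam m) := by
          simp [Finset.mul_sum]
      _ = ∑ m, ∑ j, (x j - xb j) * (A m j * lam m) := Finset.sum_comm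
      _ = ∑ m, lam m * ((∑ j, A m j * x j) - ∑ j, A m j * xb j) := by
          apply Finset.sum_congr rfl; intro m _
          rw [← Finset.sum_sub_distrib, Finset.mul_sum]
          apply Finset.sum_congr rfl; intro j _; ring
  have exp1 : (∑ j, (x j - xb j) * (v xb j - ∑ m, A m j * lam m))
      = (∑ j, (x j - xb j) * v xb j) - ∑ j, (x j - xb j) * (∑ m, A m j * lam m) := by
    rw [← Finset.sum_sub_distrib]
    apply Finset.sum_congr rfl; intro j _; ring
  have exp2 : (∑ m, lam m * ((∑ j, A m j * x j) - ∑ j, A m j * xb j))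
      = (∑ m, lam m * ((∑ j, A m j * x j) - b m))
        - ∑ m, lam m * ((∑ j, A m j * xb j) - b m) := by
    rw [← Finset.sum_sub_distrib]
    apply Finset.sum_congr rfl; intro m _; ring
  have hnp : (∑ m, lam m * ((∑ j, A m j * x j) - b m)) ≤ 0 := by
    apply Finset.sum_nonpos
    intro m _
    exact mul_nonpos_of_nonneg_of_nonpos (hlam m) (by linarith [hxQ m])
  linarith
end
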